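/- Let p ∈ (0,∞] (with 𝕜 = ℝ or ℂ) and let x ∈ ℓ_p be a sequence with only finitely many zero coordinates. Then there exists a 𝕜-subspace Y with x ∈ Y ⊆ ℓ_p, dim Y = 𝔠, and every nonzero y ∈ Y has only finitely many zero coordinates. In particular, Z(ℓ_p) is maximal pointwise lineable. -/
import Mathlib


open Filter
open scoped ENNReal

/-- Membership in `ℓ_p` for `p ∈ (0,∞]`: for `p = ∞` boundedness, for
`p < ∞` summability of `‖x n‖^p`. -/
def InLp {𝕜 : Type} [RCLike 𝕜] (p : ℝ≥0∞) (x : ℕ → 𝕜) : Prop :=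
  if p = ⊤ then ∃ C : ℝ, ∀ n, ‖x n‖ ≤ C
  else Summable (fun n => ‖x n‖ ^ p.toReal)

/-- The exponential-type sum `∑ c t * t^n` is eventually nonzero. -/
lemma aux_evnz {𝕜 : Type} [RCLike 𝕜] (c : ↥(Set.Ioc (0:ℝ) 1) →₀ 𝕜) (hc : c ≠ 0) :
    ∀ᶠ n in atTop, (∑ t ∈ c.support, c t * ((t : ℝ) : 𝕜) ^ n) ≠ 0 := by
  have hs : c.support.Nonempty := Finsupp.support_nonempty_iff.mpr hc
  set t₀ := c.support.max' hs with ht₀def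
  have ht₀mem : t₀ ∈ c.support := c.support.max'_mem hs
  have ht₀pos : (0:ℝ) < (t₀ : ℝ) := t₀.2.1
  have hc₀ : c t₀ ≠ 0 := Finsupp.mem_support_iff.mp ht₀mem
  -- the renormalized sum
  set h : ℕ → 𝕜 := fun n => ∑ t ∈ c.support, c t * ((((t:ℝ)/(t₀:ℝ)) : ℝ) : 𝕜) ^ n with hh
  have hlim : Tendsto h atTop (nhds (c t₀)) := by
    have : Tendsto h atTop (nhds (∑ t ∈ c.support, if t = t₀ then c t₀ else 0)) := by
      apply tendsto_finset_sum
      intro t ht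
      by_cases htt : t = t₀
      · rw [htt]
        simp only [if_pos rfl]
        have h1 : ((((t₀:ℝ)/(t₀:ℝ)) : ℝ) : 𝕜) = 1 := by
          rw [div_self (ne_of_gt ht₀pos)]; exact RCLike.ofReal_one
        simp only [h1, one_pow, mul_one]
        exact tendsto_const_nhds
      · simp only [if_neg htt]
        have hle : (t : ℝ) ≤ (t₀ : ℝ) := c.support.le_max' t ht
        have hlt : (t : ℝ) < (t₀ : ℝ) := lt_of_le_of_ne hle (fun hcoe => htt (Subtype.ext hcoe))
        have hpos : (0:ℝ) < (t : ℝ) := t.2.1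
        have hnorm : ‖((((t:ℝ)/(t₀:ℝ)) : ℝ) : 𝕜)‖ < 1 := by
          rw [RCLike.norm_ofReal, abs_of_pos (div_pos hpos ht₀pos)]
          exact (div_lt_one ht₀pos).mpr hlt
        have := (tendsto_pow_atTop_nhds_zero_of_norm_lt_one hnorm).const_mul (c t)
        simpa using this
    simpa [Finset.sum_ite_eq' c.support t₀ (fun _ => c t₀), ht₀mem] using this
  have hev : ∀ᶠ n in atTop, h n ≠ 0 := hlim.eventually_ne hc₀
  filter_upwards [hev] with n hn
  intro habs
  apply hn
  have key : h n = (((t₀:ℝ) : 𝕜))⁻¹ ^ n * ∑ t ∈ c.support, c t * ((t : ℝ) : 𝕜) ^ n := by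
    rw [Finset.mul_sum]
    apply Finset.sum_congr rfl
    intro t _
    have : ((((t:ℝ)/(t₀:ℝ)) : ℝ) : 𝕜) = ((t:ℝ):𝕜) * (((t₀:ℝ):𝕜))⁻¹ := by
      push_cast [div_eq_mul_inv]; ring
    rw [this, mul_pow]
    ring
  rw [key, habs, mul_zero]

/-- Let `p ∈ (0,∞]` and let `x ∈ ℓ_p` have only finitely
many zero coordinates.  Then there is a subspace `Y` with `x ∈ Y ⊆ ℓ_p`,
`dim Y = 𝔠`, and every nonzero `y ∈ Y` has only finitely many zero
coordinates.  In particular `Z(ℓ_p)` is maximal pointwise lineable. -/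
theorem stmt6 {𝕜 : Type} [RCLike 𝕜] (p : ℝ≥0∞) (hp : 0 < p)
    (x : ℕ → 𝕜) (hx : InLp p x) (hxz : {n : ℕ | x n = 0}.Finite) :
    ∃ Y : Submodule 𝕜 (ℕ → 𝕜), x ∈ Y ∧
      (↑Y : Set (ℕ → 𝕜)) ⊆ {y | InLp p y} ∧
      Module.rank 𝕜 ↥Y = Cardinal.continuum ∧
      ∀ y ∈ Y, y ≠ 0 → {n : ℕ | y n = 0}.Finite := by
  classical
  set ι := ↥(Set.Ioc (0:ℝ) 1)
  set v : ι → ℕ → 𝕜 := fun t n => x n * ((t : ℝ) : 𝕜) ^ n with hv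
  set T : (ι →₀ 𝕜) →ₗ[𝕜] (ℕ → 𝕜) := Finsupp.linearCombination 𝕜 v with hT
  have hTapp : ∀ (c : ι →₀ 𝕜) (n : ℕ),
      T c n = x n * ∑ t ∈ c.support, c t * ((t : ℝ) : 𝕜) ^ n := by
    intro c n
    rw [hT, Finsupp.linearCombination_apply, Finsupp.sum]
    simp only [Finset.sum_apply, Pi.smul_apply, smul_eq_mul]
    rw [Finset.mul_sum]
    apply Finset.sum_congr rfl
    intro t _
    simp only [hv]
    ring
  -- eventual nonvanishing of g, zero set finiteness
  have hzero : ∀ c : ι →₀ 𝕜, c ≠ 0 → {n : ℕ | T c n = 0}.Finite := by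
    intro c hc
    obtain ⟨N, hN⟩ := eventually_atTop.mp (aux_evnz c hc)
    apply Set.Finite.subset (hxz.union (Set.finite_Iio N))
    intro n hn
    simp only [Set.mem_setOf_eq] at hn
    rw [hTapp] at hn
    rcases mul_eq_zero.mp hn with h | h
    · exact Or.inl h
    · right
      by_contra hlt
      exact hN n (le_of_not_gt hlt) h
  -- injectivity of T
  have hxinf : {n : ℕ | x n ≠ 0}.Infinite := by
    have := hxz.infinite_compl
    simpa [Set.compl_setOf] using this
  have hinj : Function.Injective T := by
    rw [injective_iff_map_eq_zero]
    intro c hc0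
    by_contra hc
    obtain ⟨N, hN⟩ := eventually_atTop.mp (aux_evnz c hc)
    obtain ⟨n, hn, hnN⟩ := hxinf.exists_gt N
    have := congrFun hc0 n
    rw [hTapp] at this
    simp only [Pi.zero_apply] at this
    rcases mul_eq_zero.mp this with h | h
    · exact hn h
    · exact hN n hnN.le h
  refine ⟨LinearMap.range T, ?_, ?_, ?_, ?_⟩
  · -- x ∈ range T
    refine ⟨Finsupp.single ⟨1, by simp⟩ 1, ?_⟩
    rw [hT, Finsupp.linearCombination_single]
    funext n
    simp [hv]
  · -- InLp
    rintro y ⟨c, rfl⟩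
    have hbound : ∀ n, ‖T c n‖ ≤ (∑ t ∈ c.support, ‖c t‖) * ‖x n‖ := by
      intro n
      rw [hTapp]
      rw [norm_mul]
      rw [mul_comm]
      gcongr
      calc ‖∑ t ∈ c.support, c t * ((t : ℝ) : 𝕜) ^ n‖
          ≤ ∑ t ∈ c.support, ‖c t * ((t : ℝ) : 𝕜) ^ n‖ := norm_sum_le _ _
        _ ≤ ∑ t ∈ c.support, ‖c t‖ := by
            apply Finset.sum_le_sum
            intro t _
            rw [norm_mul]
            have : ‖((t : ℝ) : 𝕜) ^ n‖ ≤ 1 := by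
              rw [norm_pow, RCLike.norm_ofReal, abs_of_pos t.2.1]
              exact pow_le_one₀ t.2.1.le t.2.2
            calc ‖c t‖ * ‖((t : ℝ) : 𝕜) ^ n‖ ≤ ‖c t‖ * 1 := by gcongr
              _ = ‖c t‖ := mul_one _
    set C := ∑ t ∈ c.support, ‖c t‖ with hC
    have hC0 : 0 ≤ C := Finset.sum_nonneg fun t _ => norm_nonneg _
    simp only [Set.mem_setOf_eq, InLp] at hx ⊢
    by_cases hptop : p = ⊤
    · rw [if_pos hptop] at hx ⊢
      obtain ⟨B, hB⟩ := hx
      exact ⟨C * B, fun n => (hbound n).trans (mul_le_mul_of_nonneg_left (hB n) hC0)⟩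
    · rw [if_neg hptop] at hx ⊢
      have hq : 0 < p.toReal := ENNReal.toReal_pos hp.ne' hptop
      refine Summable.of_nonneg_of_le (fun n => Real.rpow_nonneg (norm_nonneg _) _)
        (fun n => ?_) (hx.mul_left (C ^ p.toReal))
      calc ‖T c n‖ ^ p.toReal ≤ (C * ‖x n‖) ^ p.toReal :=
            Real.rpow_le_rpow (norm_nonneg _) (hbound n) hq.le
        _ = C ^ p.toReal * ‖x n‖ ^ p.toReal := Real.mul_rpow hC0 (norm_nonneg _)
  · -- rank
    have e := (LinearEquiv.ofInjective T hinj).rank_eq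
    rw [← e, rank_finsupp_self']
    exact Cardinal.mk_Ioc_real one_pos
  · -- zero sets
    rintro y ⟨c, rfl⟩ hy
    have hc : c ≠ 0 := by rintro rfl; simp at hy
    exact hzero c hc
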